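/- Let $A$ be a commutative ring, $M$ a module with a finite increasing filtration $0 = U_{-1} \subseteq U_0 \subseteq \cdots \subseteq U_n = M$ by submodules such that each quotient $U_i/U_{i-1}$ is projective, and suppose given a decreasing filtration $\mathrm{Fil}^{\bullet} M$ opposite to $U_{\bullet}$, meaning $M = U_i \oplus \mathrm{Fil}^{i+1} M$ for all $i$. Then each inclusion $U_i \hookrightarrow M$ is split, and $M \cong \bigoplus_{i=0}^n (U_i \cap \mathrm{Fil}^i M)$ as $A$-modules. -/

import Mathlib

/-- A finite increasing filtration `0 = U₋₁ ⊆ U₀ ⊆ ⋯ ⊆ Uₙ = M` with projective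
graded pieces, together with an opposite decreasing filtration `Fil`, splits:
each `Uᵢ` is a direct summand and `M = ⊕ᵢ (Uᵢ ⊓ Filⁱ)`. -/
theorem opposite_filtration_module_splitting (A M : Type*) [CommRing A]
    [AddCommGroup M] [Module A M] (n : ℕ)
    (U Fil : ℤ → Submodule A M)
    (hUbot : U (-1) = ⊥) (hUtop : U (n : ℤ) = ⊤)
    (hUmono : ∀ i : ℤ, -1 ≤ i → i < (n : ℤ) → U i ≤ U (i + 1))
    (hproj : ∀ i : ℤ, 0 ≤ i → i ≤ (n : ℤ) →
      Module.Projective A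
        (↥(U i) ⧸ (Submodule.comap (U i).subtype (U (i - 1)))))
    (hopp : ∀ i : ℤ, -1 ≤ i → i ≤ (n : ℤ) → IsCompl (U i) (Fil (i + 1))) :
    (∀ i : ℤ, 0 ≤ i → i ≤ (n : ℤ) → ∃ N : Submodule A M, IsCompl (U i) N) ∧
    DirectSum.IsInternal (fun i : Fin (n + 1) =>
      U ((i : ℕ) : ℤ) ⊓ Fil ((i : ℕ) : ℤ)) := by
  -- Extended monotonicity of `U` on the interval `[-1, n]`.
  have hchain : ∀ i j : ℤ, -1 ≤ i → i ≤ j → j ≤ (n : ℤ) → U i ≤ U j := by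
    intro i j hi hij hjn
    exact Int.le_induction (motive := fun j _ => j ≤ (n : ℤ) → U i ≤ U j) (fun _ => le_rfl)
      (fun k hk ih hkn =>
        (ih (by linarith)).trans (hUmono k (by linarith) (by linarith))) j hij hjn
  set V : Fin (n + 1) → Submodule A M :=
    fun i : Fin (n + 1) => U ((i : ℕ) : ℤ) ⊓ Fil ((i : ℕ) : ℤ) with hV
  -- Key finite-sum lemma: components of a vanishing sum vanish.
  have haux : ∀ s : Finset (Fin (n + 1)), ∀ g : Fin (n + 1) → M,
      (∀ i, g i ∈ V i) → (∑ i ∈ s, g i) = 0 → ∀ i ∈ s, g i = 0 := by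
    intro s
    induction s using Finset.induction_on_max with
    | empty => intro g _ _ i hi; exact absurd hi (Finset.notMem_empty i)
    | insert a s ha ih =>
        intro g hg hsum i hi
        have hane : a ∉ s := fun h => lt_irrefl a (ha a h)
        rw [Finset.sum_insert hane] at hsum
        -- the top component lies in `U (a-1) ⊓ Fil a = ⊥`
        have hga : g a = 0 := by
          have h1 : g a ∈ Fil ((a : ℕ) : ℤ) := (hg a).2
          have h2 : g a ∈ U (((a : ℕ) : ℤ) - 1) := by
            have : g a = -∑ i ∈ s, g i := by linear_combination (norm := abel) hsum
            rw [this]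
            refine neg_mem (Submodule.sum_mem _ fun x hx => ?_)
            have hxa : (x : ℕ) < (a : ℕ) := ha x hx
            exact hchain ((x : ℕ) : ℤ) (((a : ℕ) : ℤ) - 1) (by omega)
              (by omega) (by have := a.is_le; omega) (hg x).1
          have hcompl : IsCompl (U (((a : ℕ) : ℤ) - 1)) (Fil ((a : ℕ) : ℤ)) := by
            have := hopp (((a : ℕ) : ℤ) - 1) (by omega)
              (by have := a.is_le; omega)
            simpa using this
          exact (Submodule.disjoint_def.mp hcompl.disjoint) _ h2 h1
        rcases Finset.mem_insert.mp hi with rfl | hi'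
        · exact hga
        · rw [hga, zero_add] at hsum
          exact ih g hg hsum i hi'
  have hFil0 : Fil 0 = ⊤ := by
    have := hopp (-1) le_rfl (by omega)
    rw [hUbot] at this
    have h2 := codisjoint_iff.mp this.codisjoint
    simpa using h2
  -- the supremum of the pieces is everything
  have hsup : ⨆ i, V i = ⊤ := by
    have hstep : ∀ k : ℕ, k ≤ n → U (k : ℤ) ≤ ⨆ i, V i := by
      intro k
      induction k with
      | zero =>
          intro _
          have : V ⟨0, Nat.succ_pos n⟩ = U 0 := by
            simp [hV, hFil0]
          calc U (0 : ℤ) = V ⟨0, Nat.succ_pos n⟩ := this.symm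
            _ ≤ ⨆ i, V i := le_iSup _ _
      | succ k ih =>
          intro hk
          have hkn : (k : ℤ) ≤ (n : ℤ) := by omega
          have hcompl : IsCompl (U (k : ℤ)) (Fil ((k : ℤ) + 1)) :=
            hopp (k : ℤ) (by omega) hkn
          have hmod : U ((k : ℤ) + 1) =
              U (k : ℤ) ⊔ (U ((k : ℤ) + 1) ⊓ Fil ((k : ℤ) + 1)) := by
            have h1 : U (k : ℤ) ≤ U ((k : ℤ) + 1) :=
              hUmono (k : ℤ) (by omega) (by omega)
            have := sup_inf_assoc_of_le (Fil ((k : ℤ) + 1)) h1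
            calc U ((k : ℤ) + 1) = (U (k : ℤ) ⊔ Fil ((k : ℤ) + 1)) ⊓ U ((k : ℤ) + 1) := by
                  rw [hcompl.codisjoint.eq_top, top_inf_eq]
              _ = U (k : ℤ) ⊔ Fil ((k : ℤ) + 1) ⊓ U ((k : ℤ) + 1) := this
              _ = U (k : ℤ) ⊔ (U ((k : ℤ) + 1) ⊓ Fil ((k : ℤ) + 1)) := by
                  rw [inf_comm (Fil ((k : ℤ) + 1)) (U ((k : ℤ) + 1))]
          have hpiece : U ((k : ℤ) + 1) ⊓ Fil ((k : ℤ) + 1) ≤ ⨆ i, V i := by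
            have hk1 : k + 1 < n + 1 := by omega
            have : V ⟨k + 1, hk1⟩ = U ((k : ℤ) + 1) ⊓ Fil ((k : ℤ) + 1) := by
              simp [hV]
            calc U ((k : ℤ) + 1) ⊓ Fil ((k : ℤ) + 1) = V ⟨k + 1, hk1⟩ := this.symm
              _ ≤ ⨆ i, V i := le_iSup _ _
          calc U ((k + 1 : ℕ) : ℤ) = U ((k : ℤ) + 1) := by norm_num
            _ ≤ U (k : ℤ) ⊔ (U ((k : ℤ) + 1) ⊓ Fil ((k : ℤ) + 1)) := le_of_eq hmod
            _ ≤ (⨆ i, V i) ⊔ (⨆ i, V i) := sup_le_sup (ih (by omega)) hpiece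
            _ = ⨆ i, V i := sup_idem _
    exact top_unique (hUtop ▸ hstep n le_rfl)
  -- independence of the pieces
  have hindep : iSupIndep V := by
    intro j
    rw [Submodule.disjoint_def]
    intro x hxj hxrest
    classical
    have hrest : x ∈ ⨆ i ∈ Finset.univ.erase j, V i := by
      refine (iSup_le fun i => iSup_le fun h => ?_ : (⨆ (i) (_ : i ≠ j), V i) ≤ _) hxrest
      exact le_iSup₂_of_le i (by simp [Finset.mem_erase, h]) le_rfl
    obtain ⟨μ, hμ⟩ := (Submodule.mem_iSup_finset_iff_exists_sum V x).mp hrest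
    set g : Fin (n + 1) → M := fun i => if i = j then -x else (μ i : M) with hg
    have hgmem : ∀ i, g i ∈ V i := by
      intro i
      by_cases h : i = j
      · subst h; simp only [hg, if_pos rfl]; exact neg_mem hxj
      · simp only [hg, if_neg h]; exact (μ i).2
    have hgsum : (∑ i, g i) = 0 := by
      have hsplit : (∑ i, g i) = g j + ∑ i ∈ Finset.univ.erase j, g i :=
        (Finset.add_sum_erase _ g (Finset.mem_univ j)).symm
      have : (∑ i ∈ Finset.univ.erase j, g i) = ∑ i ∈ Finset.univ.erase j, (μ i : M) := by
        refine Finset.sum_congr rfl fun i hi => ?_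
        have : i ≠ j := (Finset.mem_erase.mp hi).1
        simp [hg, this]
      rw [hsplit, this, hμ]
      simp [hg]
    have := haux Finset.univ g hgmem hgsum j (Finset.mem_univ j)
    have hx : -x = 0 := by simpa [hg] using this
    exact neg_eq_zero.mp hx
  refine ⟨fun i h0 hn => ⟨Fil (i + 1), hopp i (by omega) hn⟩, ?_⟩
  exact (DirectSum.isInternal_submodule_iff_iSupIndep_and_iSup_eq_top V).mpr ⟨hindep, hsup⟩
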